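/- Let A be a finite left brace with Soc(A) = {0} and let X ⊆ A be a transitive cycle base of A, regarded as a cycle set with operation x·y := λ_x^{-1}(y). If ∼ is a congruence of the cycle set X, then the additive subgroup I' of (A,+) generated by {x − y : x,y ∈ X, x ∼ y} is an ideal of A, and the orbit relation of I' on X refines ∼, i.e. whenever there exists a ∈ I' with λ_a(x) = y for x,y ∈ X, then x ∼ y. -/

import Mathlib

set_option linter.unusedSectionVars false


/-- A left brace structure on an additive abelian group `A`: a group operation `mul`
(with identity `one` and inverses `inv`) satisfying `a ∘ (b + c) + a = a ∘ b + a ∘ c`. -/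
structure LeftBrace (A : Type*) [AddCommGroup A] where
  mul : A → A → A
  one : A
  inv : A → A
  mul_assoc' : ∀ a b c, mul (mul a b) c = mul a (mul b c)
  one_mul' : ∀ a, mul one a = a
  mul_one' : ∀ a, mul a one = a
  inv_mul' : ∀ a, mul (inv a) a = one
  mul_inv' : ∀ a, mul a (inv a) = one
  compat : ∀ a b c, mul a (b + c) + a = mul a b + mul a c

namespace LeftBrace

variable {A : Type*} [AddCommGroup A]

/-- The map `λ_a : b ↦ -a + a ∘ b`. -/
def lam (B : LeftBrace A) (a b : A) : A := -a + B.mul a b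

/-- The cycle set operation `x · y := λ_x⁻¹ (y)` associated to a left brace. -/
noncomputable def cop (B : LeftBrace A) (x y : A) : A :=
  @Function.invFun A A ⟨0⟩ (B.lam x) y

/-- An ideal of a left brace: a normal subgroup of `(A, ∘)` invariant under all `λ_a`. -/
def IsIdeal (B : LeftBrace A) (I : Set A) : Prop :=
  B.one ∈ I ∧ (∀ a ∈ I, ∀ b ∈ I, B.mul a b ∈ I) ∧ (∀ a ∈ I, B.inv a ∈ I) ∧
    (∀ g : A, ∀ a ∈ I, B.mul (B.mul g a) (B.inv g) ∈ I) ∧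
    (∀ g : A, ∀ a ∈ I, B.lam g a ∈ I)

end LeftBrace

namespace LeftBrace

variable {A : Type*} [AddCommGroup A] (B : LeftBrace A)

theorem bmul_zero (a : A) : B.mul a 0 = a := by
  have h := B.compat a 0 0
  rw [add_zero] at h
  exact (add_left_cancel h).symm

theorem bone_eq_zero : B.one = (0 : A) :=
  (B.bmul_zero B.one).symm.trans (B.one_mul' 0)

theorem bzero_mul (b : A) : B.mul 0 b = b := by
  rw [← B.bone_eq_zero]; exact B.one_mul' b

theorem lam_add (a b c : A) : B.lam a (b + c) = B.lam a b + B.lam a c := by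
  have h := B.compat a b c
  unfold lam
  have h2 : B.mul a (b + c) = B.mul a b + B.mul a c - a := by rw [← h]; abel
  rw [h2]; abel

theorem lam_zero (a : A) : B.lam a 0 = 0 := by
  unfold lam
  rw [B.bmul_zero]; abel

theorem lam_neg (a b : A) : B.lam a (-b) = - B.lam a b := by
  have h := B.lam_add a b (-b)
  rw [add_neg_cancel, B.lam_zero] at h
  have h2 : B.lam a b + B.lam a (-b) = 0 := h.symm
  rw [add_eq_zero_iff_eq_neg] at h2
  have := congrArg Neg.neg h2
  rw [neg_neg] at this
  exact this.symm

theorem lam_sub (a b c : A) : B.lam a (b - c) = B.lam a b - B.lam a c := by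
  rw [sub_eq_add_neg, B.lam_add, B.lam_neg, sub_eq_add_neg]

theorem lam_mul (a b c : A) : B.lam (B.mul a b) c = B.lam a (B.lam b c) := by
  have h1 := B.compat a b (-b)
  rw [add_neg_cancel, B.bmul_zero] at h1
  -- h1 : a + a = B.mul a b + B.mul a (-b)
  have e1 : B.mul a (-b) = a + a - B.mul a b := by rw [h1]; abel
  have h2 := B.compat a (-b) (B.mul b c)
  have e2 : B.mul a (-b + B.mul b c) = B.mul a (-b) + B.mul (B.mul a b) c - a := by
    rw [B.mul_assoc', eq_sub_iff_add_eq]; exact h2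
  unfold lam
  rw [e2, e1]; abel

theorem lam_zero_left (b : A) : B.lam 0 b = b := by
  unfold lam
  rw [B.bzero_mul]; abel

theorem lam_inv_lam (a b : A) : B.lam (B.inv a) (B.lam a b) = b := by
  rw [← B.lam_mul, B.inv_mul', B.bone_eq_zero, B.lam_zero_left]

theorem lam_lam_inv (a b : A) : B.lam a (B.lam (B.inv a) b) = b := by
  rw [← B.lam_mul, B.mul_inv', B.bone_eq_zero, B.lam_zero_left]

theorem mul_eq_add_lam (a b : A) : B.mul a b = a + B.lam a b := by
  unfold lam; abel

theorem inv_eq_neg_lam (a : A) : B.inv a = - B.lam (B.inv a) a := by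
  have h := B.mul_eq_add_lam (B.inv a) a
  rw [B.inv_mul', B.bone_eq_zero] at h
  have h2 : B.inv a + B.lam (B.inv a) a = 0 := h.symm
  rwa [add_eq_zero_iff_eq_neg] at h2

theorem binv_inv (a : A) : B.inv (B.inv a) = a := by
  have h := B.mul_assoc' (B.inv (B.inv a)) (B.inv a) a
  rw [B.inv_mul' (B.inv a), B.one_mul', B.inv_mul' a, B.mul_one'] at h
  exact h.symm

theorem lam_cop (x y : A) : B.lam x (B.cop x y) = y := by
  have : Nonempty A := ⟨0⟩
  exact Function.invFun_eq ⟨B.lam (B.inv x) y, B.lam_lam_inv x y⟩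

theorem lam_injective (x : A) : Function.Injective (B.lam x) := by
  intro a b h
  have := congrArg (B.lam (B.inv x)) h
  rwa [B.lam_inv_lam, B.lam_inv_lam] at this

theorem cop_eq (x y : A) : B.cop x y = B.lam (B.inv x) y := by
  apply B.lam_injective x
  rw [B.lam_lam_inv, B.lam_cop]

theorem cop_self (a : A) : B.cop a a = -(B.inv a) := by
  rw [B.cop_eq]
  have h := B.inv_eq_neg_lam a
  have h2 := congrArg Neg.neg h
  rw [neg_neg] at h2
  exact h2.symm

theorem add_eq_mul (a b : A) : a + b = B.mul a (B.lam (B.inv a) b) := by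
  rw [B.mul_eq_add_lam, B.lam_lam_inv]

theorem lam_list_sum (a : A) (l : List A) : B.lam a l.sum = (l.map (B.lam a)).sum := by
  induction l with
  | nil => simp [B.lam_zero]
  | cons x t ih => simp [B.lam_add, ih]

end LeftBrace

namespace StmtAux

open LeftBrace

/-- If a bijection of a finite type maps `X` into `X` and preserves `r` on `X`,
then so does its inverse. -/
theorem aux_inv {A : Type*} [Finite A] (X : Set A) (r : A → A → Prop)
    (f g : A → A) (hgf : ∀ a, g (f a) = a) (hfg : ∀ a, f (g a) = a)
    (hX : ∀ z ∈ X, f z ∈ X)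
    (hr : ∀ z ∈ X, ∀ w ∈ X, r z w → r (f z) (f w)) :
    (∀ z ∈ X, g z ∈ X) ∧ (∀ z ∈ X, ∀ w ∈ X, r z w → r (g z) (g w)) := by
  let e : Equiv.Perm A := ⟨f, g, hgf, hfg⟩
  have he : ∀ z : A, e z = f z := fun _ => rfl
  have key : ∀ k : ℕ, (∀ z ∈ X, (e ^ k) z ∈ X) ∧
      (∀ z ∈ X, ∀ w ∈ X, r z w → r ((e ^ k) z) ((e ^ k) w)) := by
    intro k
    induction k with
    | zero =>
      constructor
      · intro z hz; simpa [pow_zero, Equiv.Perm.one_apply] using hz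
      · intro z hz w hw h; simpa [pow_zero, Equiv.Perm.one_apply] using h
    | succ k ih =>
      have hs : ∀ z : A, (e ^ (k + 1)) z = (e ^ k) (f z) := by
        intro z
        rw [pow_succ, Equiv.Perm.mul_apply, he]
      constructor
      · intro z hz; rw [hs]; exact ih.1 _ (hX z hz)
      · intro z hz w hw h
        rw [hs, hs]
        exact ih.2 _ (hX z hz) _ (hX w hw) (hr z hz w hw h)
  obtain ⟨n, hn, hen⟩ := (isOfFinOrder_of_finite e).exists_pow_eq_one
  have hinj : Function.Injective f := fun a b h => by rw [← hgf a, h, hgf b]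
  have hg : ∀ z : A, g z = (e ^ (n - 1)) z := by
    intro z
    apply hinj
    rw [hfg]
    have h1 : f ((e ^ (n - 1)) z) = (e ^ n) z := by
      conv_rhs => rw [show n = (n - 1) + 1 from (Nat.succ_pred_eq_of_pos hn).symm]
      rw [pow_succ', Equiv.Perm.mul_apply, he]
    rw [h1, hen, Equiv.Perm.one_apply]
  constructor
  · intro z hz; rw [hg]; exact (key (n - 1)).1 z hz
  · intro z hz w hw h; rw [hg, hg]; exact (key (n - 1)).2 z hz w hw h

/-- In a finite group, the subgroup closure is contained in the submonoid closure. -/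
theorem mem_addSubmonoidClosure {A : Type*} [AddCommGroup A] [Finite A] (s : Set A)
    {a : A} (ha : a ∈ AddSubgroup.closure s) : a ∈ AddSubmonoid.closure s := by
  have hneg : ∀ b : A, b ∈ AddSubmonoid.closure s → -b ∈ AddSubmonoid.closure s := by
    intro b hb
    obtain ⟨n, hn, hb0⟩ := (isOfFinAddOrder_of_finite b).exists_nsmul_eq_zero
    have h1 : (n - 1) • b + b = 0 := by
      rw [← succ_nsmul, Nat.sub_add_cancel hn]
      exact hb0
    rw [add_eq_zero_iff_eq_neg] at h1
    rw [← h1]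
    exact nsmul_mem hb _
  let G : AddSubgroup A :=
    { AddSubmonoid.closure s with neg_mem' := fun hx => hneg _ hx }
  have hle : AddSubgroup.closure s ≤ G :=
    (AddSubgroup.closure_le G).mpr (fun x hx => AddSubmonoid.subset_closure hx)
  exact hle ha

section Main

variable {A : Type*} [AddCommGroup A] [Finite A] (B : LeftBrace A) (X : Set A)
  (r : A → A → Prop)

/-- `g` preserves the relation `r` on `X` through `λ_g`. -/
def Pres (g : A) : Prop := ∀ z ∈ X, ∀ w ∈ X, r z w → r (B.lam g z) (B.lam g w)

theorem pres_zero : Pres B X r 0 := by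
  intro z hz w hw h
  rw [B.lam_zero_left, B.lam_zero_left]
  exact h

theorem pres_mul (hclosed : ∀ a : A, ∀ x ∈ X, B.lam a x ∈ X)
    {a b : A} (ha : Pres B X r a) (hb : Pres B X r b) : Pres B X r (B.mul a b) := by
  intro z hz w hw h
  rw [B.lam_mul, B.lam_mul]
  exact ha _ (hclosed b z hz) _ (hclosed b w hw) (hb z hz w hw h)

theorem pres_inv (hclosed : ∀ a : A, ∀ x ∈ X, B.lam a x ∈ X)
    {g : A} (hg : Pres B X r g) : Pres B X r (B.inv g) := by
  have h := aux_inv X r (B.lam g) (B.lam (B.inv g))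
    (fun a => B.lam_inv_lam g a) (fun a => B.lam_lam_inv g a)
    (fun z hz => hclosed g z hz) hg
  exact h.2

theorem pres_mem (hclosed : ∀ a : A, ∀ x ∈ X, B.lam a x ∈ X)
    (hrefl : ∀ x ∈ X, r x x)
    (hcong : ∀ x ∈ X, ∀ y ∈ X, ∀ u ∈ X, ∀ v ∈ X,
      r x y → r u v → r (B.cop x u) (B.cop y v))
    {x : A} (hx : x ∈ X) : Pres B X r x := by
  have h1 : Pres B X r (B.inv x) := by
    intro z hz w hw h
    rw [← B.cop_eq, ← B.cop_eq]
    exact hcong x hx x hx z hz w hw (hrefl x hx) h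
  have h2 := pres_inv B X r hclosed h1
  rwa [B.binv_inv] at h2

theorem pres_all (hclosed : ∀ a : A, ∀ x ∈ X, B.lam a x ∈ X)
    (hrefl : ∀ x ∈ X, r x x)
    (hcong : ∀ x ∈ X, ∀ y ∈ X, ∀ u ∈ X, ∀ v ∈ X,
      r x y → r u v → r (B.cop x u) (B.cop y v))
    (hgen : AddSubgroup.closure X = ⊤) (g : A) : Pres B X r g := by
  have hg : g ∈ AddSubmonoid.closure X :=
    mem_addSubmonoidClosure X (by rw [hgen]; trivial)
  obtain ⟨l, hl, hsum⟩ := AddSubmonoid.exists_list_of_mem_closure hg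
  suffices H : ∀ n : ℕ, ∀ l : List A, l.length = n → (∀ y ∈ l, y ∈ X) → Pres B X r l.sum by
    rw [← hsum]
    exact H l.length l rfl hl
  intro n
  induction n with
  | zero =>
    intro l hlen hmem
    rw [List.length_eq_zero_iff] at hlen
    subst hlen
    simp only [List.sum_nil]
    exact pres_zero B X r
  | succ n ih =>
    intro l hlen hmem
    rcases l with _ | ⟨x, t⟩
    · simp at hlen
    · have hx : x ∈ X := hmem x List.mem_cons_self
      have hsum2 : (x :: t).sum = B.mul x ((t.map (B.lam (B.inv x))).sum) := by
        rw [List.sum_cons, B.add_eq_mul, B.lam_list_sum]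
      rw [hsum2]
      apply pres_mul B X r hclosed (pres_mem B X r hclosed hrefl hcong hx)
      apply ih
      · rw [List.length_map]
        simpa using hlen
      · intro y hy
        obtain ⟨u, hu, rfl⟩ := List.mem_map.mp hy
        exact hclosed _ _ (hmem u (List.mem_cons_of_mem x hu))

theorem cop_diag_inj (hclosed : ∀ a : A, ∀ x ∈ X, B.lam a x ∈ X)
    (hcong : ∀ x ∈ X, ∀ y ∈ X, ∀ u ∈ X, ∀ v ∈ X,
      r x y → r u v → r (B.cop x u) (B.cop y v))
    {u p : A} (hu : u ∈ X) (hp : p ∈ X)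
    (h : r (B.cop u u) (B.cop p p)) : r u p := by
  have hTinj : Function.Injective (fun a : A => -(B.inv a)) := by
    intro a b hab
    simp only at hab
    have h1 := congrArg Neg.neg hab
    rw [neg_neg, neg_neg] at h1
    have h2 := congrArg B.inv h1
    rwa [B.binv_inv, B.binv_inv] at h2
  obtain ⟨g, hgf, hfg⟩ :=
    Function.bijective_iff_has_inverse.mp (Finite.injective_iff_bijective.mp hTinj)
  have hTX : ∀ z ∈ X, (fun a : A => -(B.inv a)) z ∈ X := by
    intro z hz
    show -(B.inv z) ∈ X
    rw [← B.cop_self, B.cop_eq]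
    exact hclosed _ _ hz
  have hTr : ∀ z ∈ X, ∀ w ∈ X, r z w →
      r ((fun a : A => -(B.inv a)) z) ((fun a : A => -(B.inv a)) w) := by
    intro z hz w hw hzw
    show r (-(B.inv z)) (-(B.inv w))
    rw [← B.cop_self, ← B.cop_self]
    exact hcong z hz w hw z hz w hw hzw hzw
  have haux := aux_inv X r (fun a : A => -(B.inv a)) g hgf hfg hTX hTr
  have h1 : r (-(B.inv u)) (-(B.inv p)) := by
    rw [← B.cop_self, ← B.cop_self]
    exact h
  have hu' : -(B.inv u) ∈ X := hTX u hu
  have hp' : -(B.inv p) ∈ X := hTX p hp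
  have h2 := haux.2 _ hu' _ hp' h1
  have e1 : g (-(B.inv u)) = u := hgf u
  have e2 : g (-(B.inv p)) = p := hgf p
  rwa [e1, e2] at h2

theorem key_lemma (hclosed : ∀ a : A, ∀ x ∈ X, B.lam a x ∈ X)
    (hrefl : ∀ x ∈ X, r x x)
    (hcong : ∀ x ∈ X, ∀ y ∈ X, ∀ u ∈ X, ∀ v ∈ X,
      r x y → r u v → r (B.cop x u) (B.cop y v))
    {u v : A} (hu : u ∈ X) (hv : v ∈ X) (huv : r u v)
    {z : A} (hz : z ∈ X) : r z (B.lam (u - v) z) := by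
  set d := u - v with hd
  set p := B.lam (B.inv d) v with hp
  have hpX : p ∈ X := hclosed _ _ hv
  have hdp : B.mul d p = u := by
    rw [hp, B.mul_eq_add_lam, B.lam_lam_inv, hd]
    abel
  have hLp : ∀ c : A, B.lam p c = B.lam (B.inv d) (B.lam u c) := by
    intro c
    rw [← hdp, B.lam_mul, B.lam_inv_lam]
  have hcopu : B.cop p p = B.cop u v := by
    have h1 : B.lam p (B.cop u v) = p := by
      rw [hLp, B.cop_eq, B.lam_lam_inv]
    have h2 := congrArg (B.lam (B.inv p)) h1
    rw [B.lam_inv_lam] at h2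
    rw [B.cop_eq p]
    exact h2.symm
  have hTT : r (B.cop u u) (B.cop p p) := by
    rw [hcopu]
    exact hcong u hu u hu u hu v hv (hrefl u hu) huv
  have hup : r u p := cop_diag_inj B X r hclosed hcong hu hpX hTT
  have hcopz : r (B.cop u z) (B.cop p z) := hcong u hu p hpX z hz z hz hup (hrefl z hz)
  have hcuX : B.cop u z ∈ X := by rw [B.cop_eq]; exact hclosed _ _ hz
  have hcpX : B.cop p z ∈ X := by rw [B.cop_eq]; exact hclosed _ _ hz
  have h3 := pres_mem B X r hclosed hrefl hcong hu _ hcuX _ hcpX hcopz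
  rw [B.lam_cop] at h3
  have h4 : B.lam u (B.cop p z) = B.lam d z := by
    have h5 := hLp (B.cop p z)
    rw [B.lam_cop] at h5
    have h6 := congrArg (B.lam d) h5
    rw [B.lam_lam_inv] at h6
    exact h6.symm
  rwa [h4] at h3

theorem lamD_mem (hclosed : ∀ a : A, ∀ x ∈ X, B.lam a x ∈ X)
    (hrefl : ∀ x ∈ X, r x x)
    (hcong : ∀ x ∈ X, ∀ y ∈ X, ∀ u ∈ X, ∀ v ∈ X,
      r x y → r u v → r (B.cop x u) (B.cop y v))
    (hgen : AddSubgroup.closure X = ⊤) (g : A) {d : A}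
    (hd : d ∈ {d : A | ∃ x ∈ X, ∃ y ∈ X, r x y ∧ d = x - y}) :
    B.lam g d ∈ {d : A | ∃ x ∈ X, ∃ y ∈ X, r x y ∧ d = x - y} := by
  obtain ⟨x, hx, y, hy, hxy, rfl⟩ := hd
  refine ⟨B.lam g x, hclosed g x hx, B.lam g y, hclosed g y hy, ?_, ?_⟩
  · exact pres_all B X r hclosed hrefl hcong hgen g x hx y hy hxy
  · rw [B.lam_sub]

theorem orbit_refines (hclosed : ∀ a : A, ∀ x ∈ X, B.lam a x ∈ X)
    (hrefl : ∀ x ∈ X, r x x)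
    (htrans : ∀ x ∈ X, ∀ y ∈ X, ∀ z ∈ X, r x y → r y z → r x z)
    (hcong : ∀ x ∈ X, ∀ y ∈ X, ∀ u ∈ X, ∀ v ∈ X,
      r x y → r u v → r (B.cop x u) (B.cop y v))
    (hgen : AddSubgroup.closure X = ⊤) :
    ∀ a ∈ AddSubgroup.closure {d : A | ∃ x ∈ X, ∃ y ∈ X, r x y ∧ d = x - y},
      ∀ z ∈ X, r z (B.lam a z) := by
  intro a ha
  have haD : a ∈ AddSubmonoid.closure {d : A | ∃ x ∈ X, ∃ y ∈ X, r x y ∧ d = x - y} :=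
    mem_addSubmonoidClosure _ ha
  obtain ⟨l, hl, hsum⟩ := AddSubmonoid.exists_list_of_mem_closure haD
  suffices H : ∀ n : ℕ, ∀ l : List A, l.length = n →
      (∀ y ∈ l, y ∈ {d : A | ∃ x ∈ X, ∃ y ∈ X, r x y ∧ d = x - y}) →
      ∀ z ∈ X, r z (B.lam l.sum z) by
    intro z hz
    rw [← hsum]
    exact H l.length l rfl hl z hz
  intro n
  induction n with
  | zero =>
    intro l hlen hmem z hz
    rw [List.length_eq_zero_iff] at hlen
    subst hlen
    simp only [List.sum_nil, B.lam_zero_left]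
    exact hrefl z hz
  | succ n ih =>
    intro l hlen hmem z hz
    rcases l with _ | ⟨dd, t⟩
    · simp at hlen
    · have hdd : dd ∈ {d : A | ∃ x ∈ X, ∃ y ∈ X, r x y ∧ d = x - y} :=
        hmem dd List.mem_cons_self
      have hsum2 : (dd :: t).sum = B.mul dd ((t.map (B.lam (B.inv dd))).sum) := by
        rw [List.sum_cons, B.add_eq_mul, B.lam_list_sum]
      rw [hsum2, B.lam_mul]
      have htX : ∀ y ∈ t.map (B.lam (B.inv dd)),
          y ∈ {d : A | ∃ x ∈ X, ∃ y ∈ X, r x y ∧ d = x - y} := by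
        intro y hy
        obtain ⟨u, hu, rfl⟩ := List.mem_map.mp hy
        exact lamD_mem B X r hclosed hrefl hcong hgen _ (hmem u (List.mem_cons_of_mem dd hu))
      have hlen2 : (t.map (B.lam (B.inv dd))).length = n := by
        rw [List.length_map]
        simpa using hlen
      have h1 := ih _ hlen2 htX z hz
      set s : A := (t.map (B.lam (B.inv dd))).sum with hs
      have hsX : B.lam s z ∈ X := hclosed _ _ hz
      obtain ⟨x, hx, y, hy, hxy, hddval⟩ := hdd
      have h2 : r (B.lam s z) (B.lam dd (B.lam s z)) := by
        rw [hddval]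
        exact key_lemma B X r hclosed hrefl hcong hx hy hxy hsX
      exact htrans z hz _ hsX _ (hclosed _ _ hsX) h1 h2

end Main

end StmtAux

theorem stmt9 {A : Type*} [AddCommGroup A] [Finite A] (B : LeftBrace A)
    -- Soc(A) = {0}
    (hsoc : {a : A | ∀ b, a + b = B.mul a b} = {0})
    -- X is a transitive cycle base: an orbit of the λ-action generating (A, +)
    (X : Set A) (hne : X.Nonempty)
    (hclosed : ∀ a : A, ∀ x ∈ X, B.lam a x ∈ X)
    (horbit : ∀ x ∈ X, ∀ y ∈ X, ∃ a : A, B.lam a x = y)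
    (hgen : AddSubgroup.closure X = ⊤)
    -- r is a congruence of the cycle set X
    (r : A → A → Prop)
    (hrefl : ∀ x ∈ X, r x x)
    (hsymm : ∀ x ∈ X, ∀ y ∈ X, r x y → r y x)
    (htrans : ∀ x ∈ X, ∀ y ∈ X, ∀ z ∈ X, r x y → r y z → r x z)
    (hcong : ∀ x ∈ X, ∀ y ∈ X, ∀ u ∈ X, ∀ v ∈ X,
      r x y → r u v → r (B.cop x u) (B.cop y v))
    -- I' is the additive subgroup generated by {x - y : x, y ∈ X, x ∼ y}
    (I' : AddSubgroup A)
    (hI' : I' = AddSubgroup.closure {d : A | ∃ x ∈ X, ∃ y ∈ X, r x y ∧ d = x - y}) :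
    -- I' is an ideal of A
    B.IsIdeal (I' : Set A) ∧
    -- and the orbit relation of I' on X refines ∼
    (∀ x ∈ X, ∀ y ∈ X, (∃ a ∈ I', B.lam a x = y) → r x y) := by
  subst hI'
  have horb := StmtAux.orbit_refines B X r hclosed hrefl htrans hcong hgen
  -- λ-invariance of the closure
  have hlaminv : ∀ g : A,
      ∀ a ∈ AddSubgroup.closure {d : A | ∃ x ∈ X, ∃ y ∈ X, r x y ∧ d = x - y},
      B.lam g a ∈ AddSubgroup.closure {d : A | ∃ x ∈ X, ∃ y ∈ X, r x y ∧ d = x - y} := by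
    intro g a ha
    refine AddSubgroup.closure_induction
      (p := fun x _ => B.lam g x ∈
        AddSubgroup.closure {d : A | ∃ x ∈ X, ∃ y ∈ X, r x y ∧ d = x - y})
      (fun x hx => ?_) ?_ (fun x y hx hy px py => ?_) (fun x hx px => ?_) ha
    · exact AddSubgroup.subset_closure
        (StmtAux.lamD_mem B X r hclosed hrefl hcong hgen g hx)
    · show B.lam g 0 ∈ _
      rw [B.lam_zero]; exact zero_mem _
    · show B.lam g (x + y) ∈ _
      rw [B.lam_add]; exact add_mem px py
    · show B.lam g (-x) ∈ _
      rw [B.lam_neg]; exact neg_mem px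
  have hsubmem : ∀ a ∈ AddSubgroup.closure {d : A | ∃ x ∈ X, ∃ y ∈ X, r x y ∧ d = x - y},
      ∀ c : A, c - B.lam a c ∈
        AddSubgroup.closure {d : A | ∃ x ∈ X, ∃ y ∈ X, r x y ∧ d = x - y} := by
    intro a ha c
    have hc : c ∈ AddSubgroup.closure X := by rw [hgen]; trivial
    refine AddSubgroup.closure_induction
      (p := fun c _ => c - B.lam a c ∈
        AddSubgroup.closure {d : A | ∃ x ∈ X, ∃ y ∈ X, r x y ∧ d = x - y})
      (fun x hx => ?_) ?_ (fun x y hx hy px py => ?_) (fun x hx px => ?_) hc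
    · show x - B.lam a x ∈ _
      exact AddSubgroup.subset_closure
        ⟨x, hx, B.lam a x, hclosed a x hx, horb a ha x hx, rfl⟩
    · show (0 : A) - B.lam a 0 ∈ _
      rw [B.lam_zero, sub_zero]; exact zero_mem _
    · show (x + y) - B.lam a (x + y) ∈ _
      have h : (x + y) - B.lam a (x + y) = (x - B.lam a x) + (y - B.lam a y) := by
        rw [B.lam_add]; abel
      rw [h]; exact add_mem px py
    · show (-x) - B.lam a (-x) ∈ _
      have h : (-x) - B.lam a (-x) = -(x - B.lam a x) := by
        rw [B.lam_neg]; abel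
      rw [h]; exact neg_mem px
  constructor
  · refine ⟨?_, ?_, ?_, ?_, ?_⟩
    · -- one ∈ I'
      show B.one ∈ AddSubgroup.closure _
      rw [B.bone_eq_zero]
      exact zero_mem _
    · -- mul closed
      intro a ha b hb
      show B.mul a b ∈ AddSubgroup.closure _
      rw [B.mul_eq_add_lam]
      exact add_mem ha (hlaminv a b hb)
    · -- inv closed
      intro a ha
      show B.inv a ∈ AddSubgroup.closure _
      rw [B.inv_eq_neg_lam]
      exact neg_mem (hlaminv _ _ ha)
    · -- conjugation
      intro g a ha
      show B.mul (B.mul g a) (B.inv g) ∈ AddSubgroup.closure _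
      have hgc : B.lam g (B.lam (B.inv g) g) = g := B.lam_lam_inv g g
      have hinvg : B.inv g = -(B.lam (B.inv g) g) := B.inv_eq_neg_lam g
      have hc2 := hsubmem a ha (B.lam (B.inv g) g)
      have key : B.mul (B.mul g a) (B.inv g) =
          B.lam g a + B.lam g (B.lam (B.inv g) g - B.lam a (B.lam (B.inv g) g)) := by
        rw [B.mul_eq_add_lam (B.mul g a) (B.inv g), B.lam_mul, B.mul_eq_add_lam g a,
          B.lam_sub]
        conv_lhs => rw [hinvg, B.lam_neg, B.lam_neg]
        conv_rhs => rw [hgc]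
        abel
      rw [key]
      exact add_mem (hlaminv g a ha) (hlaminv g _ hc2)
    · -- λ-invariance
      intro g a ha
      exact hlaminv g a ha
  · intro x hx y hy ⟨a, haI, hlam⟩
    have h := horb a haI x hx
    rwa [hlam] at h
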